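/- Let S_x and S_y be d×d symmetric matrices with S_y positive definite, and fix m ≤ d. For x₁,…,x_n ∈ ℝ^d with S_x = (1/n) Σ_i x_i x_iᵀ, consider minimizing D(U, z) = (1/n) Σ_i (x_i − U z_i)ᵀ S_y (x_i − U z_i) over d×m matrices U with UᵀU = I and z_i ∈ ℝ^m. For fixed U, the optimal z_i is z_i = (Uᵀ S_y U)^{-1} Uᵀ S_y x_i, and the resulting value is D(U) = tr(S_x S_y) − tr((Uᵀ S_y U)^{-1} Uᵀ S_y S_x S_y U). -/

import Mathlib

open Matrix Finset

lemma aux_mulVec_dp {d m : ℕ} (U : Matrix (Fin d) (Fin m) ℝ) (w : Fin m → ℝ) (v : Fin d → ℝ) :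
    (U *ᵥ w) ⬝ᵥ v = w ⬝ᵥ (Uᵀ *ᵥ v) := by
  rw [dotProduct_comm, dotProduct_mulVec, ← mulVec_transpose, dotProduct_comm]

lemma aux_trace_vecMulVec_mul {d : ℕ} (a b : Fin d → ℝ) (A : Matrix (Fin d) (Fin d) ℝ) :
    (vecMulVec a b * A).trace = b ⬝ᵥ (A *ᵥ a) := by
  simp only [trace, diag_apply, mul_apply, vecMulVec_apply, dotProduct, mulVec]
  rw [Finset.sum_comm]
  exact Finset.sum_congr rfl fun j _ => by rw [Finset.mul_sum]; exact Finset.sum_congr rfl fun i _ => by ring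

theorem stmt9 (d m n : ℕ) (hn : 0 < n)
    (Sy : Matrix (Fin d) (Fin d) ℝ) (hSy : Sy.PosDef)
    (U : Matrix (Fin d) (Fin m) ℝ) (hU : Uᵀ * U = 1)
    (x : Fin n → Fin d → ℝ)
    (Sx : Matrix (Fin d) (Fin d) ℝ)
    (hSx : Sx = (1 / (n : ℝ)) • ∑ i : Fin n, vecMulVec (x i) (x i))
    (zopt : Fin n → Fin m → ℝ)
    (hzopt : ∀ i, zopt i = ((Uᵀ * Sy * U)⁻¹ * Uᵀ * Sy) *ᵥ x i) :
    (∀ z : Fin n → Fin m → ℝ,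
      (1 / (n : ℝ)) * ∑ i : Fin n,
          (x i - U *ᵥ zopt i) ⬝ᵥ (Sy *ᵥ (x i - U *ᵥ zopt i)) ≤
        (1 / (n : ℝ)) * ∑ i : Fin n,
          (x i - U *ᵥ z i) ⬝ᵥ (Sy *ᵥ (x i - U *ᵥ z i))) ∧
    (1 / (n : ℝ)) * ∑ i : Fin n,
        (x i - U *ᵥ zopt i) ⬝ᵥ (Sy *ᵥ (x i - U *ᵥ zopt i))
      = (Sx * Sy).trace - ((Uᵀ * Sy * U)⁻¹ * Uᵀ * Sy * Sx * Sy * U).trace := by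
  have hSyT : Syᵀ = Sy := hSy.1
  -- M is positive definite
  have hMh : (Uᵀ * Sy * U).IsHermitian := by
    have := isHermitian_conjTranspose_mul_mul U hSy.1
    simpa using this
  have hUinj : ∀ v : Fin m → ℝ, U *ᵥ v = 0 → v = 0 := by
    intro v hv
    have : (Uᵀ * U) *ᵥ v = 0 := by rw [← mulVec_mulVec, hv, mulVec_zero]
    simpa [hU] using this
  have hMpd : (Uᵀ * Sy * U).PosDef := by
    refine posDef_iff_dotProduct_mulVec.mpr ⟨hMh, fun v hv => ?_⟩
    have h1 : (Uᵀ * Sy * U) *ᵥ v = Uᵀ *ᵥ (Sy *ᵥ (U *ᵥ v)) := by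
      simp [mulVec_mulVec, Matrix.mul_assoc]
    have h2 : star v ⬝ᵥ ((Uᵀ * Sy * U) *ᵥ v) = (U *ᵥ v) ⬝ᵥ (Sy *ᵥ (U *ᵥ v)) := by
      rw [h1, star_trivial, ← aux_mulVec_dp]
    rw [h2]
    have hUv : U *ᵥ v ≠ 0 := fun h => hv (hUinj v h)
    simpa using hSy.dotProduct_mulVec_pos hUv
  have hMinv : (Uᵀ * Sy * U) * (Uᵀ * Sy * U)⁻¹ = 1 :=
    mul_nonsing_inv _ (isUnit_iff_ne_zero.mpr hMpd.det_pos.ne')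
  -- key matrix identity
  have hkey : Uᵀ * Sy * U * ((Uᵀ * Sy * U)⁻¹ * Uᵀ * Sy) = Uᵀ * Sy := by
    calc Uᵀ * Sy * U * ((Uᵀ * Sy * U)⁻¹ * Uᵀ * Sy)
        = (Uᵀ * Sy * U * (Uᵀ * Sy * U)⁻¹) * (Uᵀ * Sy) := by
          simp only [Matrix.mul_assoc]
      _ = Uᵀ * Sy := by rw [hMinv, Matrix.one_mul]
  -- residual orthogonality
  have hres : ∀ i, Uᵀ *ᵥ (Sy *ᵥ (x i - U *ᵥ zopt i)) = 0 := by
    intro i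
    rw [hzopt i]
    simp only [mulVec_sub, mulVec_mulVec]
    have hkey2 : Uᵀ * (Sy * (U * ((Uᵀ * Sy * U)⁻¹ * Uᵀ * Sy))) = Uᵀ * Sy := by
      rw [← Matrix.mul_assoc, ← Matrix.mul_assoc]; exact hkey
    rw [hkey2, sub_self]
  -- symmetry of Sy for dot products
  have hsym : ∀ (a b : Fin d → ℝ), a ⬝ᵥ (Sy *ᵥ b) = b ⬝ᵥ (Sy *ᵥ a) := by
    intro a b
    rw [dotProduct_mulVec, ← mulVec_transpose, hSyT, dotProduct_comm]
  -- expansion lemma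
  have expand : ∀ (r : Fin d → ℝ) (w : Fin m → ℝ), Uᵀ *ᵥ (Sy *ᵥ r) = 0 →
      (r - U *ᵥ w) ⬝ᵥ (Sy *ᵥ (r - U *ᵥ w)) = r ⬝ᵥ (Sy *ᵥ r) + w ⬝ᵥ ((Uᵀ * Sy * U) *ᵥ w) := by
    intro r w h0
    have h1 : (U *ᵥ w) ⬝ᵥ (Sy *ᵥ r) = 0 := by rw [aux_mulVec_dp, h0, dotProduct_zero]
    have h2 : r ⬝ᵥ (Sy *ᵥ (U *ᵥ w)) = 0 := by rw [hsym, h1]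
    have h3 : (U *ᵥ w) ⬝ᵥ (Sy *ᵥ (U *ᵥ w)) = w ⬝ᵥ ((Uᵀ * Sy * U) *ᵥ w) := by
      rw [aux_mulVec_dp]
      congr 1
      simp [mulVec_mulVec, Matrix.mul_assoc]
    rw [mulVec_sub, dotProduct_sub, sub_dotProduct, sub_dotProduct, h1, h2, h3]
    ring
  constructor
  · intro z
    apply mul_le_mul_of_nonneg_left _ (by positivity)
    apply Finset.sum_le_sum
    intro i _
    have hdecomp : x i - U *ᵥ z i = (x i - U *ᵥ zopt i) - U *ᵥ (z i - zopt i) := by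
      rw [mulVec_sub]; abel
    rw [hdecomp, expand _ _ (hres i)]
    have := hMpd.posSemidef.dotProduct_mulVec_nonneg (z i - zopt i)
    rw [star_trivial] at this
    linarith
  · -- value computation
    have hval : ∀ i, (x i - U *ᵥ zopt i) ⬝ᵥ (Sy *ᵥ (x i - U *ᵥ zopt i))
        = x i ⬝ᵥ (Sy *ᵥ x i) - x i ⬝ᵥ ((Sy * U * ((Uᵀ * Sy * U)⁻¹ * Uᵀ * Sy)) *ᵥ x i) := by
      intro i
      have h2 : (U *ᵥ zopt i) ⬝ᵥ (Sy *ᵥ (x i - U *ᵥ zopt i)) = 0 := by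
        rw [aux_mulVec_dp, hres i, dotProduct_zero]
      have h1 : (x i - U *ᵥ zopt i) ⬝ᵥ (Sy *ᵥ (x i - U *ᵥ zopt i))
          = x i ⬝ᵥ (Sy *ᵥ (x i - U *ᵥ zopt i)) := by
        rw [sub_dotProduct, h2, sub_zero]
      rw [h1, mulVec_sub, dotProduct_sub]
      congr 2
      rw [hzopt i]
      simp only [mulVec_mulVec, Matrix.mul_assoc]
    have hsum : ∑ i : Fin n, (x i - U *ᵥ zopt i) ⬝ᵥ (Sy *ᵥ (x i - U *ᵥ zopt i))
        = ∑ i : Fin n, x i ⬝ᵥ (Sy *ᵥ x i)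
          - ∑ i : Fin n, x i ⬝ᵥ ((Sy * U * ((Uᵀ * Sy * U)⁻¹ * Uᵀ * Sy)) *ᵥ x i) := by
      rw [← Finset.sum_sub_distrib]
      exact Finset.sum_congr rfl fun i _ => hval i
    have htr1 : (Sx * Sy).trace = (1 / (n : ℝ)) * ∑ i : Fin n, x i ⬝ᵥ (Sy *ᵥ x i) := by
      rw [hSx, Matrix.smul_mul, trace_smul, Finset.sum_mul, trace_sum]
      simp only [smul_eq_mul, aux_trace_vecMulVec_mul]
    have htr2 : ((Uᵀ * Sy * U)⁻¹ * Uᵀ * Sy * Sx * Sy * U).trace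
        = (1 / (n : ℝ)) * ∑ i : Fin n, x i ⬝ᵥ ((Sy * U * ((Uᵀ * Sy * U)⁻¹ * Uᵀ * Sy)) *ᵥ x i) := by
      have : (Uᵀ * Sy * U)⁻¹ * Uᵀ * Sy * Sx * Sy * U
          = ((Uᵀ * Sy * U)⁻¹ * Uᵀ * Sy) * (Sx * (Sy * U)) := by
        simp only [Matrix.mul_assoc]
      rw [this, trace_mul_comm, Matrix.mul_assoc, hSx, Matrix.smul_mul, trace_smul,
        Finset.sum_mul, trace_sum]
      simp only [smul_eq_mul, Matrix.mul_assoc]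
      congr 1
      refine Finset.sum_congr rfl fun i _ => ?_
      rw [aux_trace_vecMulVec_mul]
    rw [hsum, mul_sub, htr1, htr2]
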